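/- Let G be a connected k-regular multigraph with |V(G)| ≥ 4. Then the restricted edge-connectivity λ'(G) is well-defined (a restricted edge-cut exists) and λ'(G) ≤ ξ(G), where ξ(G) = min{d(u)+d(v)−2μ(uv) : uv ∈ E(G)}. -/

import Mathlib

/-- A multigraph: multiple edges allowed (recorded as edge multiplicities), no loops. -/
structure Multigraph (V : Type*) where
  mult : V → V → ℕ
  symm : ∀ u v, mult u v = mult v u
  loopless : ∀ v, mult v v = 0

namespace Multigraph

variable {V : Type*}

/-- Adjacency: at least one edge between `u` and `v`. -/
def Adj (G : Multigraph V) (u v : V) : Prop := 0 < G.mult u v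

instance (G : Multigraph V) (v : V) : DecidablePred (G.Adj v) :=
  fun u => inferInstanceAs (Decidable (0 < G.mult v u))

/-- Reachability by walks. -/
def Reachable (G : Multigraph V) : V → V → Prop := Relation.ReflTransGen G.Adj

/-- A multigraph is connected if it is nonempty and every two vertices are joined by a walk. -/
def Connected (G : Multigraph V) : Prop := Nonempty V ∧ ∀ u v, G.Reachable u v

/-- An automorphism of a multigraph: a permutation preserving all edge multiplicities. -/
def Aut (G : Multigraph V) : Type _ :=
  {e : Equiv.Perm V // ∀ u v, G.mult (e u) (e v) = G.mult u v}

/-- A set of edges of `G`, given by sub-multiplicities. -/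
structure EdgeSub (G : Multigraph V) where
  f : V → V → ℕ
  symm : ∀ u v, f u v = f v u
  le : ∀ u v, f u v ≤ G.mult u v

/-- The multigraph obtained by deleting the edge set `F`. -/
def deleteEdges (G : Multigraph V) (F : G.EdgeSub) : Multigraph V where
  mult u v := G.mult u v - F.f u v
  symm u v := by rw [G.symm u v, F.symm u v]
  loopless v := by simp [G.loopless v]

/-- `F` is an edge-cut if removing it disconnects `G`. -/
def IsEdgeCut (G : Multigraph V) (F : G.EdgeSub) : Prop := ¬ (G.deleteEdges F).Connected

/-- `F` is a restricted edge-cut if removing it disconnects `G` and leaves no isolated vertex. -/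
def IsRestrictedEdgeCut (G : Multigraph V) (F : G.EdgeSub) : Prop :=
  G.IsEdgeCut F ∧ ∀ v, ∃ u, (G.deleteEdges F).Adj v u

/-- `G` is bipartite with parts `V₁`, `V₂`. -/
def IsBipartition [DecidableEq V] [Fintype V] (G : Multigraph V) (V₁ V₂ : Finset V) : Prop :=
  Disjoint V₁ V₂ ∧ V₁ ∪ V₂ = Finset.univ ∧ ∀ u v, G.Adj u v → (u ∈ V₁ ↔ v ∈ V₂)

/-- A bipartite multigraph is half-transitive if `Aut G` is transitive on each part. -/
def IsHalfTransitive [DecidableEq V] [Fintype V] (G : Multigraph V) (V₁ V₂ : Finset V) : Prop :=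
  G.IsBipartition V₁ V₂ ∧
  (∀ u ∈ V₁, ∀ v ∈ V₁, ∃ e : G.Aut, e.1 u = v) ∧
  (∀ u ∈ V₂, ∀ v ∈ V₂, ∃ e : G.Aut, e.1 u = v)

/-- An imprimitive block for `Aut G`. -/
def IsImprimitiveBlock [DecidableEq V] (G : Multigraph V) (A : Finset V) [Fintype V] : Prop :=
  A.Nonempty ∧ A ≠ Finset.univ ∧
  ∀ e : G.Aut, A.image e.1 = A ∨ Disjoint (A.image e.1) A

/-- The induced sub-multigraph on a vertex set `S`. -/
def induce (G : Multigraph V) (S : Finset V) : Multigraph {x // x ∈ S} where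
  mult a b := G.mult a.1 b.1
  symm a b := G.symm a.1 b.1
  loopless a := G.loopless a.1

section Fin

variable [Fintype V] [DecidableEq V]

/-- The degree of a vertex (counting multiplicities). -/
def degree (G : Multigraph V) (v : V) : ℕ := ∑ u, G.mult v u

/-- The minimum degree `δ(G)`. -/
noncomputable def minDegree (G : Multigraph V) : ℕ := sInf {n | ∃ v, G.degree v = n}

/-- The maximum edge multiplicity `μ(G)`. -/
def maxMult (G : Multigraph V) : ℕ := Finset.univ.sup fun p : V × V => G.mult p.1 p.2

/-- `d(A)`: the number of edges between `A` and its complement. -/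
def cut (G : Multigraph V) (A : Finset V) : ℕ := ∑ u ∈ A, ∑ v ∈ Aᶜ, G.mult u v

/-- The number of edges in an edge set. -/
def EdgeSub.card {G : Multigraph V} (F : G.EdgeSub) : ℕ := (∑ u, ∑ v, F.f u v) / 2

/-- The edge-boundary `N(A)` of a vertex set `A`, as an edge set. -/
def boundary (G : Multigraph V) (A : Finset V) : G.EdgeSub where
  f u v := if (u ∈ A ∧ v ∉ A) ∨ (v ∈ A ∧ u ∉ A) then G.mult u v else 0
  symm u v := by
    by_cases h1 : u ∈ A <;> by_cases h2 : v ∈ A <;> simp [h1, h2, G.symm u v]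
  le u v := by split_ifs <;> simp

/-- The edge-connectivity `λ(G)`. -/
noncomputable def edgeConn (G : Multigraph V) : ℕ :=
  sInf {n | ∃ F : G.EdgeSub, G.IsEdgeCut F ∧ F.card = n}

/-- The restricted edge-connectivity `λ'(G)`. -/
noncomputable def rEdgeConn (G : Multigraph V) : ℕ :=
  sInf {n | ∃ F : G.EdgeSub, G.IsRestrictedEdgeCut F ∧ F.card = n}

/-- The minimum edge degree `ξ(G) = min {d(u)+d(v)-2μ(uv) : uv ∈ E}`. -/
noncomputable def minEdgeDegree (G : Multigraph V) : ℕ :=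
  sInf {n | ∃ u v, G.Adj u v ∧ n = G.degree u + G.degree v - 2 * G.mult u v}

/-- A `λ`-fragment: a vertex set whose edge-boundary is a minimum edge-cut. -/
def IsFragment (G : Multigraph V) (A : Finset V) : Prop :=
  A.Nonempty ∧ Aᶜ.Nonempty ∧ G.IsEdgeCut (G.boundary A) ∧ G.cut A = G.edgeConn

/-- A `λ`-atom: a `λ`-fragment of minimum cardinality. -/
def IsAtom (G : Multigraph V) (A : Finset V) : Prop :=
  G.IsFragment A ∧ ∀ B : Finset V, G.IsFragment B → A.card ≤ B.card

/-- A strict `λ`-fragment: a `λ`-fragment `C` with `2 ≤ |C| ≤ |V| - 2`. -/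
def IsStrictFragment (G : Multigraph V) (A : Finset V) : Prop :=
  G.IsFragment A ∧ 2 ≤ A.card ∧ A.card ≤ Fintype.card V - 2

/-- A `λ`-superatom: a strict `λ`-fragment of minimum cardinality. -/
def IsSuperAtom (G : Multigraph V) (A : Finset V) : Prop :=
  G.IsStrictFragment A ∧ ∀ B : Finset V, G.IsStrictFragment B → A.card ≤ B.card

/-- A `λ'`-fragment: a vertex set whose edge-boundary is a minimum restricted edge-cut. -/
def IsRFragment (G : Multigraph V) (A : Finset V) : Prop :=
  G.IsRestrictedEdgeCut (G.boundary A) ∧ G.cut A = G.rEdgeConn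

/-- A `λ'`-atom: a `λ'`-fragment of minimum cardinality. -/
def IsRAtom (G : Multigraph V) (A : Finset V) : Prop :=
  G.IsRFragment A ∧ ∀ B : Finset V, G.IsRFragment B → A.card ≤ B.card

/-- `G` is super edge-connected if every minimum edge-cut is the set of all edges
incident with some vertex. -/
def IsSuperEdgeConnected (G : Multigraph V) : Prop :=
  ∀ F : G.EdgeSub, G.IsEdgeCut F → F.card = G.edgeConn →
    ∃ v : V, ∀ u w : V, F.f u w = if u = v ∨ w = v then G.mult u w else 0

end Fin

end Multigraph

variable {V : Type*} [Fintype V] [DecidableEq V]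

open Multigraph



section Helpers

lemma boundary_f_eq (G : Multigraph V) (A : Finset V) (a b : V) :
    (G.boundary A).f a b =
      (if a ∈ A ∧ b ∉ A then G.mult a b else 0) +
      (if b ∈ A ∧ a ∉ A then G.mult a b else 0) := by
  simp only [Multigraph.boundary]
  by_cases h1 : a ∈ A <;> by_cases h2 : b ∈ A <;> simp [h1, h2]

lemma sum_half (G : Multigraph V) (A : Finset V) :
    (∑ a, ∑ b, if a ∈ A ∧ b ∉ A then G.mult a b else 0) = G.cut A := by
  have h : ∀ a, (∑ b, if a ∈ A ∧ b ∉ A then G.mult a b else 0)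
      = (if a ∈ A then ∑ b ∈ Aᶜ, G.mult a b else 0) := by
    intro a
    by_cases ha : a ∈ A
    · simp only [ha, true_and, if_true]
      have hc : ∀ b : V, (if b ∉ A then G.mult a b else 0) = if b ∈ Aᶜ then G.mult a b else 0 := by
        simp [Finset.mem_compl]
      rw [Finset.sum_congr rfl fun b _ => hc b, Finset.sum_ite_mem, Finset.univ_inter]
    · simp [ha]
  rw [Finset.sum_congr rfl fun a _ => h a, Finset.sum_ite_mem, Finset.univ_inter]
  rfl

lemma sum_boundary (G : Multigraph V) (A : Finset V) :
    (∑ a, ∑ b, (G.boundary A).f a b) = 2 * G.cut A := by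
  simp_rw [boundary_f_eq, Finset.sum_add_distrib]
  rw [sum_half]
  have h2 : (∑ a, ∑ b, if b ∈ A ∧ a ∉ A then G.mult a b else 0) = G.cut A := by
    rw [Finset.sum_comm]
    rw [Finset.sum_congr rfl fun b _ => Finset.sum_congr rfl fun a _ =>
      (by rw [G.symm] : (if b ∈ A ∧ a ∉ A then G.mult a b else 0)
        = (if b ∈ A ∧ a ∉ A then G.mult b a else 0))]
    exact sum_half G A
  rw [h2]; omega

lemma boundary_card (G : Multigraph V) (A : Finset V) :
    (G.boundary A).card = G.cut A := by
  unfold Multigraph.EdgeSub.card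
  rw [sum_boundary]; omega

lemma degree_split (G : Multigraph V) (w : V) (s : Finset V) :
    G.degree w = (∑ x ∈ s, G.mult w x) + ∑ x ∈ sᶜ, G.mult w x :=
  (Finset.sum_add_sum_compl s _).symm

end Helpers

/-- For a connected `k`-regular multigraph on at least four vertices, a restricted edge-cut
exists and `λ'(G) ≤ ξ(G)`. -/
theorem rEdgeConn_le_minEdgeDegree_of_regular (G : Multigraph V) (k : ℕ)
    (hreg : ∀ v : V, G.degree v = k) (hG : G.Connected) (h4 : 4 ≤ Fintype.card V) :
    (∃ F : G.EdgeSub, G.IsRestrictedEdgeCut F) ∧ G.rEdgeConn ≤ G.minEdgeDegree := by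
  classical
  obtain ⟨ne, hreach⟩ := hG
  have hedge : ∃ u v, G.Adj u v := by
    obtain ⟨x, y, hxy⟩ := Fintype.exists_pair_of_one_lt_card (α := V) (by omega)
    rcases (hreach x y).cases_head with h | ⟨c, hc, -⟩
    · exact absurd h hxy
    · exact ⟨x, c, hc⟩
  have hne : {n | ∃ u v, G.Adj u v ∧ n = G.degree u + G.degree v - 2 * G.mult u v}.Nonempty := by
    obtain ⟨u, v, huv⟩ := hedge
    exact ⟨_, u, v, huv, rfl⟩
  obtain ⟨u, v, huv, hξ⟩ : ∃ u v, G.Adj u v ∧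
      G.minEdgeDegree = G.degree u + G.degree v - 2 * G.mult u v := by
    simp only [Multigraph.minEdgeDegree]
    exact Nat.sInf_mem hne
  have hμk : ∀ a b : V, G.mult a b ≤ k := by
    intro a b
    rw [← hreg a]
    exact Finset.single_le_sum (fun i _ => Nat.zero_le _) (Finset.mem_univ b)
  have huv' : u ≠ v := by
    rintro rfl
    simpa [Multigraph.Adj, G.loopless u] using huv
  have hk1 : 1 ≤ k := lt_of_lt_of_le huv (hμk u v)
  set A : Finset V := {u, v} with hA
  have hmin : ∀ a b : V, G.Adj a b → G.minEdgeDegree ≤ k + k - 2 * G.mult a b := by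
    intro a b hab
    have h := Nat.sInf_le (show (G.degree a + G.degree b - 2 * G.mult a b) ∈
      {n | ∃ u v, G.Adj u v ∧ n = G.degree u + G.degree v - 2 * G.mult u v} from ⟨a, b, hab, rfl⟩)
    rw [hreg, hreg] at h
    exact h
  have hξ2 : G.minEdgeDegree = k + k - 2 * G.mult u v := by rw [hξ, hreg, hreg]
  -- every vertex outside A has a neighbour outside A
  have hout : ∀ w, w ∉ A → ∃ x, x ∉ A ∧ G.Adj w x := by
    intro w hw
    by_contra hcon
    push_neg at hcon
    have hwz : ∀ x, x ∉ A → G.mult w x = 0 := by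
      intro x hx
      have := hcon x hx
      simp only [Multigraph.Adj, not_lt, Nat.le_zero] at this
      exact this
    have hwu : w ≠ u := by rintro rfl; exact hw (by simp [hA])
    have hwv : w ≠ v := by rintro rfl; exact hw (by simp [hA])
    have hdegw : G.mult w u + G.mult w v = k := by
      have hs := degree_split G w A
      have hz : (∑ x ∈ Aᶜ, G.mult w x) = 0 :=
        Finset.sum_eq_zero fun x hx => hwz x (Finset.mem_compl.mp hx)
      rw [hz, Finset.sum_pair huv'] at hs
      rw [hreg w] at hs
      omega
    have huwle : G.mult u w ≤ G.mult u v := by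
      by_cases h0 : 0 < G.mult u w
      · have h1 := hmin u w h0
        have h2 := hμk u w
        have h3 := hμk u v
        omega
      · omega
    have hvwle : G.mult v w ≤ G.mult u v := by
      by_cases h0 : 0 < G.mult v w
      · have h1 := hmin v w h0
        have h2 := hμk v w
        have h3 := hμk u v
        omega
      · omega
    have hvw : v ≠ w := fun h => hwv h.symm
    have huw : u ≠ w := fun h => hwu h.symm
    have hsu : k = G.mult u v + G.mult u w + ∑ x ∈ ({v, w} : Finset V)ᶜ, G.mult u x := by
      have hs := degree_split G u ({v, w} : Finset V)
      rw [Finset.sum_pair hvw, hreg u] at hs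
      omega
    have hsv : k = G.mult v u + G.mult v w + ∑ x ∈ ({u, w} : Finset V)ᶜ, G.mult v x := by
      have hs := degree_split G v ({u, w} : Finset V)
      rw [Finset.sum_pair huw, hreg v] at hs
      omega
    have hsym1 : G.mult w u = G.mult u w := G.symm w u
    have hsym2 : G.mult w v = G.mult v w := G.symm w v
    have hsym3 : G.mult v u = G.mult u v := G.symm v u
    have hRu : (∑ x ∈ ({v, w} : Finset V)ᶜ, G.mult u x) = 0 := by omega
    have hRv : (∑ x ∈ ({u, w} : Finset V)ᶜ, G.mult v x) = 0 := by omega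
    have hu0 : ∀ x, x ∉ ({v, w} : Finset V) → G.mult u x = 0 := by
      intro x hx
      exact (Finset.sum_eq_zero_iff.mp hRu) x (Finset.mem_compl.mpr hx)
    have hv0 : ∀ x, x ∉ ({u, w} : Finset V) → G.mult v x = 0 := by
      intro x hx
      exact (Finset.sum_eq_zero_iff.mp hRv) x (Finset.mem_compl.mpr hx)
    set S : Finset V := {u, v, w} with hS
    have hclosed : ∀ a b, a ∈ S → G.Adj a b → b ∈ S := by
      intro a b ha hab
      have hb : G.mult a b ≠ 0 := hab.ne'
      by_contra hbS
      simp only [hS, Finset.mem_insert, Finset.mem_singleton, not_or] at hbS ha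
      obtain ⟨hb1, hb2, hb3⟩ := hbS
      rcases ha with rfl | rfl | rfl
      · exact hb (hu0 b (by simp [hb2, hb3]))
      · exact hb (hv0 b (by simp [hb1, hb3]))
      · exact hb (hwz b (by simp [hA, hb1, hb2]))
    have hS3 : S.card ≤ 3 := by
      refine (Finset.card_insert_le _ _).trans (Nat.succ_le_succ ?_)
      exact (Finset.card_insert_le _ _).trans (by simp)
    obtain ⟨x, hx⟩ : ∃ x, x ∉ S := by
      by_contra hc
      push_neg at hc
      have he : S = Finset.univ := Finset.eq_univ_iff_forall.mpr hc
      have : Fintype.card V ≤ 3 := by rw [← Finset.card_univ, ← he]; exact hS3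
      omega
    have hreachS : ∀ y, Relation.ReflTransGen G.Adj u y → y ∈ S := by
      intro y hy
      induction hy with
      | refl => simp [hS]
      | tail _ h2 ih => exact hclosed _ _ ih h2
    exact hx (hreachS x (hreach u x))
  set F := G.boundary A with hF
  set D := G.deleteEdges F with hD
  have hDsame : ∀ a b, (a ∈ A ↔ b ∈ A) → D.mult a b = G.mult a b := by
    intro a b h
    simp only [hD, hF, Multigraph.deleteEdges, Multigraph.boundary]
    split_ifs with hc
    · tauto
    · omega
  have hDcross : ∀ a b, ¬(a ∈ A ↔ b ∈ A) → D.mult a b = 0 := by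
    intro a b h
    simp only [hD, hF, Multigraph.deleteEdges, Multigraph.boundary]
    split_ifs with hc
    · omega
    · tauto
  have hRC : G.IsRestrictedEdgeCut F := by
    constructor
    · rintro ⟨-, hconn⟩
      obtain ⟨z, hz⟩ : ∃ z, z ∉ A := by
        by_contra hc
        push_neg at hc
        have he : A = Finset.univ := Finset.eq_univ_iff_forall.mpr hc
        have h2 : A.card ≤ 2 := (Finset.card_insert_le _ _).trans (by simp)
        have : Fintype.card V ≤ 2 := by rw [← Finset.card_univ, ← he]; exact h2
        omega
      have key : ∀ a b, a ∈ A → D.Adj a b → b ∈ A := by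
        intro a b ha hab
        by_contra hb
        have h0 : D.mult a b = 0 := hDcross a b (by tauto)
        simp only [Multigraph.Adj, h0, lt_self_iff_false] at hab
      have hreachA : ∀ y, Relation.ReflTransGen D.Adj u y → y ∈ A := by
        intro y hy
        induction hy with
        | refl => simp [hA]
        | tail _ h2 ih => exact key _ _ ih h2
      exact hz (hreachA z (hconn u z))
    · intro v0
      by_cases hv0 : v0 ∈ A
      · have hcase : v0 = u ∨ v0 = v := by simpa [hA] using hv0
        rcases hcase with rfl | rfl
        · refine ⟨v, ?_⟩
          show 0 < D.mult v0 v
          rw [hDsame v0 v (by simp [hA])]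
          exact huv
        · refine ⟨u, ?_⟩
          show 0 < D.mult v0 u
          rw [hDsame v0 u (by simp [hA])]
          rw [G.symm]
          exact huv
      · obtain ⟨x, hxA, hadj⟩ := hout v0 hv0
        refine ⟨x, ?_⟩
        show 0 < D.mult v0 x
        rw [hDsame v0 x (by simp [hv0, hxA])]
        exact hadj
  have hcutA : G.cut A = k + k - 2 * G.mult u v := by
    have hsu := degree_split G u A
    have hsv := degree_split G v A
    rw [Finset.sum_pair huv', hreg u] at hsu
    rw [Finset.sum_pair huv', hreg v] at hsv
    have hl1 : G.mult u u = 0 := G.loopless u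
    have hl2 : G.mult v v = 0 := G.loopless v
    have hsym : G.mult v u = G.mult u v := G.symm v u
    have hle := hμk u v
    have : G.cut A = (∑ y ∈ Aᶜ, G.mult u y) + ∑ y ∈ Aᶜ, G.mult v y := by
      show (∑ a ∈ A, ∑ b ∈ Aᶜ, G.mult a b) = _
      rw [Finset.sum_pair huv']
    omega
  refine ⟨⟨F, hRC⟩, ?_⟩
  have hmem : G.minEdgeDegree ∈
      {n | ∃ F : G.EdgeSub, G.IsRestrictedEdgeCut F ∧ F.card = n} :=
    ⟨F, hRC, by rw [hF, boundary_card, hcutA, hξ2]⟩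
  rw [Multigraph.rEdgeConn]
  exact Nat.sInf_le hmem
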